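/- For a generic configuration [l_1,...,l_n] of n points in P^{m-1} (with 1<m<m+1<n), the square of the map DT, where DT sends [l_1,...,l_n] to [h_{[2-m,n]}, h_{[3-m,1]}, ..., h_{[1-m,n-1]}] (with h_{[i,i+m-2]} the point of the dual projective space determined by the hyperplane spanned by l_i,...,l_{i+m-2}, indices mod n), equals the cyclic shift [l_1,...,l_n] ↦ [l_{1-m}, l_{2-m}, ..., l_{n-m}]. -/

import Mathlib

open Submodule Module

section DTaux

variable {α : Type*} [CompleteLattice α]

/-- Split a `Fin (a+b)`-indexed sup into two pieces. -/
lemma iSup_fin_add (a b : ℕ) (f : ℕ → α) :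
    (⨆ j : Fin (a + b), f j) = (⨆ j : Fin a, f j) ⊔ (⨆ j : Fin b, f (a + j)) := by
  apply le_antisymm
  · refine iSup_le fun j => ?_
    rcases lt_or_ge (j : ℕ) a with h | h
    · exact le_sup_of_le_left (le_iSup (fun j : Fin a => f j) ⟨(j : ℕ), h⟩)
    · have hj : (j : ℕ) = a + ((j : ℕ) - a) := by omega
      rw [hj]
      exact le_sup_of_le_right (le_iSup (fun j : Fin b => f (a + j)) ⟨(j : ℕ) - a, by omega⟩)
  · refine sup_le (iSup_le fun j => le_iSup (fun j : Fin (a + b) => f j) ⟨(j : ℕ), by omega⟩)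
      (iSup_le fun j => le_iSup (fun j : Fin (a + b) => f j) ⟨a + (j : ℕ), by omega⟩)

/-- Split off the last term of a `Fin (c+1)`-indexed inf. -/
lemma iInf_fin_succ' (c : ℕ) (f : ℕ → α) :
    (⨅ j : Fin (c + 1), f j) = (⨅ j : Fin c, f j) ⊓ f c := by
  apply le_antisymm
  · exact le_inf (le_iInf fun j => iInf_le (fun j : Fin (c + 1) => f j) ⟨(j : ℕ), by omega⟩)
      (iInf_le (fun j : Fin (c + 1) => f j) ⟨c, by omega⟩)
  · refine le_iInf fun j => ?_
    rcases lt_or_ge (j : ℕ) c with h | h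
    · exact inf_le_left.trans (iInf_le (fun j : Fin c => f j) ⟨(j : ℕ), h⟩)
    · have : (j : ℕ) = c := by omega
      rw [this]
      exact inf_le_right

end DTaux

section DTproof

variable {m n : ℕ} (l : ZMod n → Submodule ℂ (Fin m → ℂ))

/-- The span of the `c` consecutive lines `l i, …, l (i+c-1)`. -/
noncomputable def Sp (c : ℕ) (i : ZMod n) : Submodule ℂ (Fin m → ℂ) :=
  ⨆ j : Fin c, l (i + ((j : ℕ) : ZMod n))

lemma Sp_one (i : ZMod n) : Sp l 1 i = l i := by
  simp [Sp]

lemma Sp_split (a b : ℕ) (i : ZMod n) :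
    Sp l (a + b) i = Sp l a i ⊔ Sp l b (i + (a : ℕ)) := by
  have := iSup_fin_add a b (fun j : ℕ => l (i + (j : ZMod n)))
  rw [Sp, this]
  congr 1
  refine iSup_congr fun j => congrArg l ?_
  push_cast
  ring

lemma Sp_mono {a c : ℕ} (h : a ≤ c) (i : ZMod n) : Sp l a i ≤ Sp l c i := by
  have : c = a + (c - a) := by omega
  rw [this, Sp_split]
  exact le_sup_left

lemma Sp_top (hgen : ∀ i : ZMod n, (⨆ j : Fin m, l (i + ((j : ℕ) : ZMod n))) = ⊤)
    (i : ZMod n) : Sp l m i = ⊤ := hgen i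

lemma finrank_Sp_le (hdim : ∀ i, Module.finrank ℂ (l i) = 1) (c : ℕ) (i : ZMod n) :
    Module.finrank ℂ (Sp l c i) ≤ c := by
  induction c with
  | zero => rw [Sp, iSup_of_empty]; simp
  | succ c ih =>
      rw [show c + 1 = c + 1 from rfl, Sp_split, ]
      have h := Submodule.finrank_sup_add_finrank_inf_eq (Sp l c i) (Sp l 1 (i + (c : ℕ)))
      have h1 : Module.finrank ℂ (Sp l 1 (i + (c : ℕ))) = 1 := by
        rw [Sp_one]; exact hdim _
      omega

lemma finrank_top' : Module.finrank ℂ (⊤ : Submodule ℂ (Fin m → ℂ)) = m := by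
  rw [finrank_top]; exact Module.finrank_fin_fun ℂ

lemma finrank_Sp (hdim : ∀ i, Module.finrank ℂ (l i) = 1)
    (hgen : ∀ i : ZMod n, (⨆ j : Fin m, l (i + ((j : ℕ) : ZMod n))) = ⊤)
    {c : ℕ} (hc : c ≤ m) (i : ZMod n) :
    Module.finrank ℂ (Sp l c i) = c := by
  have htop : Sp l c i ⊔ Sp l (m - c) (i + (c : ℕ)) = ⊤ := by
    rw [← Sp_split]
    have : c + (m - c) = m := by omega
    rw [this]
    exact Sp_top l hgen i
  have h := Submodule.finrank_sup_add_finrank_inf_eq (Sp l c i) (Sp l (m - c) (i + (c : ℕ)))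
  rw [htop, finrank_top'] at h
  have h1 := finrank_Sp_le l hdim c i
  have h2 := finrank_Sp_le l hdim (m - c) (i + (c : ℕ))
  omega

lemma Sp_inf (hdim : ∀ i, Module.finrank ℂ (l i) = 1)
    (hgen : ∀ i : ZMod n, (⨆ j : Fin m, l (i + ((j : ℕ) : ZMod n))) = ⊤)
    {a : ℕ} (ha1 : 1 ≤ a) (ha : a ≤ m - 1) (hm : 1 < m) (i : ZMod n) :
    Sp l a i ⊓ Sp l (m - 1) (i + 1) = Sp l (a - 1) (i + 1) := by
  have hsplit : Sp l a i = Sp l 1 i ⊔ Sp l (a - 1) (i + 1) := by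
    have : a = 1 + (a - 1) := by omega
    rw [this, Sp_split]
    norm_num
  have hle : Sp l (a - 1) (i + 1) ≤ Sp l a i ⊓ Sp l (m - 1) (i + 1) :=
    le_inf (hsplit ▸ le_sup_right) (Sp_mono l (by omega) _)
  have hsup : Sp l a i ⊔ Sp l (m - 1) (i + 1) = ⊤ := by
    rw [eq_top_iff, ← Sp_top l hgen i]
    have hm' : Sp l m i = Sp l (1 + (m - 1)) i := by congr 1; omega
    rw [hm', Sp_split]
    simp only [Nat.cast_one]
    exact sup_le (le_sup_of_le_left ((Sp_mono l ha1 i))) le_sup_right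
  have h := Submodule.finrank_sup_add_finrank_inf_eq (Sp l a i) (Sp l (m - 1) (i + 1))
  rw [hsup, finrank_top'] at h
  rw [finrank_Sp l hdim hgen (by omega) i, finrank_Sp l hdim hgen (by omega) (i + 1)] at h
  have hfr : Module.finrank ℂ (Sp l (a - 1) (i + 1)) = a - 1 :=
    finrank_Sp l hdim hgen (by omega) (i + 1)
  exact (Submodule.eq_of_le_of_finrank_le hle (by omega)).symm

lemma iInf_Sp (hdim : ∀ i, Module.finrank ℂ (l i) = 1)
    (hgen : ∀ i : ZMod n, (⨆ j : Fin m, l (i + ((j : ℕ) : ZMod n))) = ⊤)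
    (hm : 1 < m) :
    ∀ c : ℕ, 1 ≤ c → c ≤ m - 1 → ∀ k : ZMod n,
      (⨅ j : Fin c, Sp l (m - 1) (k + ((j : ℕ) : ZMod n))) =
        Sp l (m - c) (k + ((c - 1 : ℕ) : ZMod n)) := by
  intro c
  induction c with
  | zero => intro h; omega
  | succ c ih =>
      intro _ hc k
      rcases Nat.eq_zero_or_pos c with rfl | hc1
      · simp
      · have hstep := iInf_fin_succ' c (fun j : ℕ => Sp l (m - 1) (k + (j : ZMod n)))
        have hiInf : (⨅ j : Fin (c + 1), Sp l (m - 1) (k + ((j : ℕ) : ZMod n))) =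
            (⨅ j : Fin c, Sp l (m - 1) (k + ((j : ℕ) : ZMod n))) ⊓
              Sp l (m - 1) (k + (c : ℕ)) := hstep
        have hi1 : (k + ((c - 1 : ℕ) : ZMod n)) + 1 = k + (c : ℕ) := by
          have hc' : (c : ℕ) = (c - 1) + 1 := by omega
          rw [hc']
          push_cast
          ring
        have h6 : ((c + 1 - 1 : ℕ) : ZMod n) = ((c : ℕ) : ZMod n) := by norm_num
        have hgoal : Sp l (m - (c + 1)) (k + ((c + 1 - 1 : ℕ) : ZMod n)) =
            Sp l (m - c - 1) (k + ((c : ℕ) : ZMod n)) := by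
          rw [h6]; congr 1
        rw [hiInf, ih hc1 (by omega) k, hgoal, ← hi1,
          Sp_inf l hdim hgen (a := m - c) (by omega) (by omega) hm, hi1]

end DTproof

/-- The Donaldson–Thomas transformation of `Conf_n(P^{m-1})`, at the level of
lines: configurations are maps `ZMod n → Submodule ℂ W` (lines in `W`), and the
`i`-th entry of `DT` is the dual line `h_{[i+1-m, i-1]}`, i.e. the annihilator of
the hyperplane spanned by the `m-1` consecutive lines `l_{i+1-m}, …, l_{i-1}`. -/
noncomputable def DTmap (m n : ℕ) {W : Type} [AddCommGroup W] [Module ℂ W]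
    (l : ZMod n → Submodule ℂ W) : ZMod n → Submodule ℂ (Module.Dual ℂ W) :=
  fun i =>
    Submodule.dualAnnihilator (⨆ j : Fin (m - 1), l (i + 1 - (m : ZMod n) + ((j : ℕ) : ZMod n)))

/-- `DT²` equals the cyclic shift by `m` (up to the canonical identification of
`ℂ^m` with its double dual). -/
theorem stmt_0 (m n : ℕ) (hm : 1 < m) (hn : m + 1 < n)
    (l : ZMod n → Submodule ℂ (Fin m → ℂ))
    (hdim : ∀ i, Module.finrank ℂ (l i) = 1)
    (hgen : ∀ i : ZMod n, (⨆ j : Fin m, l (i + ((j : ℕ) : ZMod n))) = ⊤) :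
    ∀ i : ZMod n, DTmap m n (DTmap m n l) i =
      Submodule.map (Module.evalEquiv ℂ (Fin m → ℂ)).toLinearMap (l (i - (m : ZMod n))) := by
  intro i
  set k : ZMod n := i + 2 - (m : ZMod n) - (m : ZMod n) with hk
  have h1 : ∀ j : Fin (m - 1),
      DTmap m n l (i + 1 - (m : ZMod n) + ((j : ℕ) : ZMod n)) =
        Submodule.dualAnnihilator (Sp l (m - 1) (k + ((j : ℕ) : ZMod n))) := by
    intro j
    unfold DTmap
    congr 1
    exact iSup_congr fun j' => congrArg l (by rw [hk]; ring)
  have h2 : DTmap m n (DTmap m n l) i =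
      Submodule.dualAnnihilator (⨆ j : Fin (m - 1),
        Submodule.dualAnnihilator (Sp l (m - 1) (k + ((j : ℕ) : ZMod n)))) := by
    unfold DTmap
    congr 1
    exact iSup_congr fun j => h1 j
  rw [h2, ← Subspace.dualAnnihilator_iInf_eq]
  have h3 : (⨅ j : Fin (m - 1), Sp l (m - 1) (k + ((j : ℕ) : ZMod n))) = l (i - (m : ZMod n)) := by
    rw [iInf_Sp l hdim hgen hm (m - 1) (by omega) le_rfl k,
      show m - (m - 1) = 1 from by omega, show m - 1 - 1 = m - 2 from by omega, Sp_one]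
    congr 1
    rw [hk]
    have : ((m - 2 : ℕ) : ZMod n) = (m : ZMod n) - 2 := by
      have : (m : ℕ) = (m - 2) + 2 := by omega
      rw [this]
      push_cast
      ring
    rw [this]
    ring
  rw [h3, Subspace.dualAnnihilator_dualAnnihilator_eq_map, Module.evalEquiv_toLinearMap]
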